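/- For n ≥ 8, the complex root γ_n of x^n - x - 1 closest to β_n with positive imaginary part satisfies 1/(|γ_n| - 1) ≤ 3n/2. -/

import Mathlib

open Complex

set_option maxHeartbeats 40000000

private lemma sq_step {x q r rq : ℝ} {n : ℕ} (hn : n ≠ 0) (hkey : (x^2)^n = x^2 + r)
    (hq : q ≤ x^2) (hr : rq ≤ r) {q' : ℝ} (hchk : q'^n ≤ q + rq) : q' ≤ x^2 :=
  le_of_pow_le_pow_left₀ hn (sq_nonneg x) (by rw [hkey]; linarith)

/-- For `n ≥ 8`, the complex root `γ_n` of `x^n - x - 1` with positive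
imaginary part closest to `β_n` (characterized by
`|γ_n - (1 + (log 2 + 2πi)/n)| ≤ 24/n²`) satisfies `1/(|γ_n| - 1) ≤ 3n/2`. -/
theorem gamma_abs_reciprocal_bound (n : ℕ) (hn : 8 ≤ n) (γ : ℂ)
    (hroot : γ ^ n - γ - 1 = 0) (him : 0 < γ.im)
    (hγ : ‖γ - (1 + ((Real.log 2 : ℂ) + 2 * Real.pi * I) / n)‖
      ≤ 24 / (n : ℝ) ^ 2) :
    1 / (‖γ‖ - 1) ≤ 3 * (n : ℝ) / 2 := by
  have hn8 : (8:ℝ) ≤ (n:ℝ) := by exact_mod_cast hn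
  have hnpos : (0:ℝ) < (n:ℝ) := by linarith
  set x := ‖γ‖ with hxdef
  set a := γ.re with hadef
  set b := γ.im with hbdef
  have hx0 : (0:ℝ) ≤ x := norm_nonneg γ
  -- decompose the center
  have hc : (1 + ((Real.log 2 : ℂ) + 2 * (Real.pi:ℝ) * I) / (n:ℕ))
      = (((1 + Real.log 2 / (n:ℝ)) : ℝ) : ℂ) + (((2*Real.pi/(n:ℝ)) : ℝ) : ℂ) * I := by
    have hne : ((n:ℕ):ℂ) ≠ 0 := by
      simp only [ne_eq, Nat.cast_eq_zero]; omega
    field_simp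
    push_cast
    field_simp
    ring
  rw [hc] at hγ
  have hre : (γ - ((((1 + Real.log 2 / (n:ℝ)) : ℝ) : ℂ) + (((2*Real.pi/(n:ℝ)) : ℝ) : ℂ) * I)).re
      = a - (1 + Real.log 2 / (n:ℝ)) := by
    simp only [Complex.sub_re, Complex.add_re, Complex.ofReal_re, Complex.mul_re,
      Complex.ofReal_im, Complex.I_re, Complex.I_im, hadef]
    ring
  have him' : (γ - ((((1 + Real.log 2 / (n:ℝ)) : ℝ) : ℂ) + (((2*Real.pi/(n:ℝ)) : ℝ) : ℂ) * I)).im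
      = b - 2*Real.pi/(n:ℝ) := by
    simp only [Complex.sub_im, Complex.add_im, Complex.ofReal_im, Complex.mul_im,
      Complex.ofReal_re, Complex.I_re, Complex.I_im, hbdef]
    ring
  have hd2 : (a - (1 + Real.log 2/(n:ℝ)))^2 + (b - 2*Real.pi/(n:ℝ))^2 ≤ (24/(n:ℝ)^2)^2 := by
    have h1 := pow_le_pow_left₀ (norm_nonneg _) hγ 2
    rw [Complex.sq_norm, Complex.normSq_apply, hre, him'] at h1
    nlinarith [h1]
  have hDpos : (0:ℝ) < 24/(n:ℝ)^2 := by positivity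
  have ha_lo : 1 + Real.log 2/(n:ℝ) - 24/(n:ℝ)^2 ≤ a := by
    nlinarith [hd2, sq_nonneg (b - 2*Real.pi/(n:ℝ)),
      sq_nonneg (a - (1 + Real.log 2/(n:ℝ)) + 24/(n:ℝ)^2), hDpos]
  have hb_lo : 2*Real.pi/(n:ℝ) - 24/(n:ℝ)^2 ≤ b := by
    nlinarith [hd2, sq_nonneg (a - (1 + Real.log 2/(n:ℝ))),
      sq_nonneg (b - 2*Real.pi/(n:ℝ) + 24/(n:ℝ)^2), hDpos]
  -- the root equation
  have hg : γ^n = γ + 1 := by linear_combination hroot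
  have e2 : x^2 = a^2 + b^2 := by
    rw [hxdef, Complex.sq_norm, Complex.normSq_apply]; ring
  have e1 : (x^n)^2 = (a+1)^2 + b^2 := by
    rw [hxdef, ← norm_pow, hg, Complex.sq_norm, Complex.normSq_apply]
    simp only [Complex.add_re, Complex.add_im, Complex.one_re, Complex.one_im, hadef, hbdef]
    ring
  have hkey : (x^2)^n = x^2 + (2*a+1) := by
    have h1 : (x^2)^n = (x^n)^2 := by rw [← pow_mul, ← pow_mul, mul_comm]
    rw [h1, e1, e2]; ring
  clear_value x a b
  clear hγ hg hc hre him' e1 hroot hxdef hadef hbdef hDpos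
  -- the main lower bound on x
  have key : 1 + 2/(3*(n:ℝ)) ≤ x := by
    by_contra hcon
    push_neg at hcon
    rcases lt_or_ge n 16 with h16 | h16
    · interval_cases n
      · -- n = 8
        have hA : (7116433/10000000 : ℝ) ≤ a := by
          have := Real.log_two_gt_d9; norm_num at ha_lo ⊢; linarith
        have hB : (4103981/10000000 : ℝ) ≤ b := by
          have := Real.pi_gt_d20; norm_num at hb_lo ⊢; linarith
        have hR : (12116433/5000000 : ℝ) ≤ 2*a + 1 := by linarith
        have hs0 : (337431/500000 : ℝ) ≤ x^2 := by
          nlinarith [sq_nonneg (a - (7116433/10000000 : ℝ)), sq_nonneg (b - (4103981/10000000 : ℝ)), hA, hB, e2]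
        have hs1 : (11518281/10000000 : ℝ) ≤ x^2 :=
          sq_step (by norm_num) hkey hs0 hR (by norm_num)
        have hs2 : (366447/312500 : ℝ) ≤ x^2 :=
          sq_step (by norm_num) hkey hs1 hR (by norm_num)
        have hs3 : (11734811/10000000 : ℝ) ≤ x^2 :=
          sq_step (by norm_num) hkey hs2 hR (by norm_num)
        have hs4 : (5867579/5000000 : ℝ) ≤ x^2 :=
          sq_step (by norm_num) hkey hs3 hR (by norm_num)
        have hs5 : (11735173/10000000 : ℝ) ≤ x^2 :=
          sq_step (by norm_num) hkey hs4 hR (by norm_num)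
        -- n = 8 endgame: disc-coupled bound
        have hxu : x^2 < (169/144 : ℝ) := by
          have h1 : x < 1 + 2/(3*((8:ℕ):ℝ)) := hcon
          norm_num at h1; nlinarith [hx0, h1]
        -- chord upper bound for (x^2)^8
        have h0s : (0:ℝ) ≤ x^2 := sq_nonneg x
        have hUs : x^2 ≤ (169/144 : ℝ) := le_of_lt hxu
        have h2p : (x^2)^2 ≤ (169/144 : ℝ)^2 := pow_le_pow_left₀ h0s hUs 2
        have h3p : (x^2)^3 ≤ (169/144 : ℝ)^3 := pow_le_pow_left₀ h0s hUs 3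
        have h4p : (x^2)^4 ≤ (169/144 : ℝ)^4 := pow_le_pow_left₀ h0s hUs 4
        have h5p : (x^2)^5 ≤ (169/144 : ℝ)^5 := pow_le_pow_left₀ h0s hUs 5
        have h6p : (x^2)^6 ≤ (169/144 : ℝ)^6 := pow_le_pow_left₀ h0s hUs 6
        have h7p : (x^2)^7 ≤ (169/144 : ℝ)^7 := pow_le_pow_left₀ h0s hUs 7
        have hsum : (x^2)^7 + (x^2)^6*(11735173/10000000:ℝ) + (x^2)^5*(11735173/10000000:ℝ)^2
            + (x^2)^4*(11735173/10000000:ℝ)^3 + (x^2)^3*(11735173/10000000:ℝ)^4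
            + (x^2)^2*(11735173/10000000:ℝ)^5 + (x^2)*(11735173/10000000:ℝ)^6
            + (11735173/10000000:ℝ)^7 ≤ (49067/2000 : ℝ) := by
          norm_num at h2p h3p h4p h5p h6p h7p hUs ⊢
          linarith
        have hchord : (x^2)^8 ≤ (17983987/5000000 : ℝ)
            + (49067/2000 : ℝ)*(x^2 - (11735173/10000000:ℝ)) := by
          have hfac : (x^2)^8 - (11735173/10000000:ℝ)^8 = (x^2 - (11735173/10000000:ℝ)) *
              ((x^2)^7 + (x^2)^6*(11735173/10000000:ℝ) + (x^2)^5*(11735173/10000000:ℝ)^2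
              + (x^2)^4*(11735173/10000000:ℝ)^3 + (x^2)^3*(11735173/10000000:ℝ)^4
              + (x^2)^2*(11735173/10000000:ℝ)^5 + (x^2)*(11735173/10000000:ℝ)^6
              + (11735173/10000000:ℝ)^7) := by ring
          have hge : (0:ℝ) ≤ x^2 - (11735173/10000000:ℝ) := by linarith
          have hE : ((11735173/10000000:ℝ))^8 ≤ (17983987/5000000 : ℝ) := by norm_num
          nlinarith [mul_le_mul_of_nonneg_left hsum hge]
        have haU : 2*a ≤ (17983987/5000000 : ℝ)
            + (49067/2000 : ℝ)*(x^2 - (11735173/10000000:ℝ)) - x^2 - 1 := by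
          have h8 : (x^2)^8 = x^2 + (2*a+1) := hkey
          linarith
        -- disc inequality, expanded
        have hb0 : (0:ℝ) ≤ b := le_of_lt him
        have ha0 : (0:ℝ) ≤ a := by linarith
        have hLl := Real.log_two_gt_d9
        have hLu := Real.log_two_lt_d9
        have hPl := Real.pi_gt_d20
        have hPu := Real.pi_lt_d20
        have hdisc : x^2 - 2*a*(1 + Real.log 2/((8:ℕ):ℝ)) - 2*b*(2*Real.pi/((8:ℕ):ℝ))
            + ((1 + Real.log 2/((8:ℕ):ℝ))^2 + (2*Real.pi/((8:ℕ):ℝ))^2) ≤ 9/64 := by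
          have hexp : (a - (1 + Real.log 2/((8:ℕ):ℝ)))^2 + (b - 2*Real.pi/((8:ℕ):ℝ))^2
              = x^2 - 2*a*(1 + Real.log 2/((8:ℕ):ℝ)) - 2*b*(2*Real.pi/((8:ℕ):ℝ))
                + ((1 + Real.log 2/((8:ℕ):ℝ))^2 + (2*Real.pi/((8:ℕ):ℝ))^2) := by
            rw [e2]; ring
          have h964 : (24/((8:ℕ):ℝ)^2)^2 = 9/64 := by norm_num
          rw [← hexp]
          calc (a - (1 + Real.log 2/((8:ℕ):ℝ)))^2 + (b - 2*Real.pi/((8:ℕ):ℝ))^2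
              ≤ (24/((8:ℕ):ℝ)^2)^2 := hd2
            _ = 9/64 := h964
        have hcast : ((8:ℕ):ℝ) = 8 := by norm_num
        rw [hcast] at hdisc
        have hac2 : (10866433975/10000000000:ℝ)^2 ≤ (1 + Real.log 2/8)^2 := by
          have h1 : (10866433975/10000000000:ℝ) ≤ 1 + Real.log 2/8 := by linarith
          exact pow_le_pow_left₀ (by norm_num) h1 2
        have hbc2 : (785398163/1000000000:ℝ)^2 ≤ (2*Real.pi/8)^2 := by
          have h1 : (785398163/1000000000:ℝ) ≤ 2*Real.pi/8 := by linarith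
          exact pow_le_pow_left₀ (by norm_num) h1 2
        have t1 : 2*a*(1 + Real.log 2/8) ≤ 2*a*(10866434/10000000:ℝ) := by
          have h1 : (1 + Real.log 2/8) ≤ (10866434/10000000:ℝ) := by linarith
          exact mul_le_mul_of_nonneg_left h1 (by linarith)
        have t2 : 2*b*(2*Real.pi/8) ≤ 2*b*(7853981635/10000000000:ℝ) := by
          have h1 : (2*Real.pi/8) ≤ (7853981635/10000000000:ℝ) := by linarith
          exact mul_le_mul_of_nonneg_left h1 (by linarith)
        have h2b : x^2 - 2*a*(10866434/10000000:ℝ) + (10866433975/10000000000:ℝ)^2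
            + (785398163/1000000000:ℝ)^2 - 9/64 ≤ 2*b*(7853981635/10000000000:ℝ) := by
          linarith [hdisc, hac2, hbc2, t1, t2]
        have hT0 : (0:ℝ) < x^2 - 2*a*(10866434/10000000:ℝ) + (10866433975/10000000000:ℝ)^2
            + (785398163/1000000000:ℝ)^2 - 9/64 := by linarith [haU, hxu, hs5]
        have hb2 : b^2 = x^2 - a^2 := by linarith [e2]
        have hfin : (x^2 - 2*a*(10866434/10000000:ℝ) + (10866433975/10000000000:ℝ)^2
            + (785398163/1000000000:ℝ)^2 - 9/64)^2
            ≤ 4*(x^2 - a^2)*(7853981635/10000000000:ℝ)^2 := by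
          have h4 : (2*b*(7853981635/10000000000:ℝ))*(2*b*(7853981635/10000000000:ℝ))
              = 4*(x^2 - a^2)*(7853981635/10000000000:ℝ)^2 := by rw [← hb2]; ring
          calc (x^2 - 2*a*(10866434/10000000:ℝ) + (10866433975/10000000000:ℝ)^2
              + (785398163/1000000000:ℝ)^2 - 9/64)^2
              = (x^2 - 2*a*(10866434/10000000:ℝ) + (10866433975/10000000000:ℝ)^2
              + (785398163/1000000000:ℝ)^2 - 9/64)*(x^2 - 2*a*(10866434/10000000:ℝ)
              + (10866433975/10000000000:ℝ)^2 + (785398163/1000000000:ℝ)^2 - 9/64) := by ring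
            _ ≤ (2*b*(7853981635/10000000000:ℝ))*(2*b*(7853981635/10000000000:ℝ)) :=
              mul_self_le_mul_self (le_of_lt hT0) h2b
            _ = 4*(x^2 - a^2)*(7853981635/10000000000:ℝ)^2 := h4
        -- final contradiction via the certificate
        have g3 : (0:ℝ) ≤ (169/144:ℝ) - x^2 := by linarith
        have g4 : (0:ℝ) ≤ ((17983987/5000000 : ℝ)
            + (49067/2000 : ℝ)*(x^2 - (11735173/10000000:ℝ)) - x^2 - 1)/2 - a := by linarith
        nlinarith [hfin, g3, g4, mul_nonneg g3 g4, sq_nonneg ((169/144:ℝ) - x^2),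
          sq_nonneg (((17983987/5000000 : ℝ)
            + (49067/2000 : ℝ)*(x^2 - (11735173/10000000:ℝ)) - x^2 - 1)/2 - a)]
      · -- n = 9
        have hA : (9759/12500 : ℝ) ≤ a := by
          have := Real.log_two_gt_d9; norm_num at ha_lo ⊢; linarith
        have hB : (2009177/5000000 : ℝ) ≤ b := by
          have := Real.pi_gt_d20; norm_num at hb_lo ⊢; linarith
        have hR : (16009/6250 : ℝ) ≤ 2*a + 1 := by linarith
        have hs0 : (154199/200000 : ℝ) ≤ x^2 := by
          nlinarith [sq_nonneg (a - (9759/12500 : ℝ)), sq_nonneg (b - (2009177/5000000 : ℝ)), hA, hB, e2]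
        have hs1 : (357219/312500 : ℝ) ≤ x^2 :=
          sq_step (by norm_num) hkey hs0 hR (by norm_num)
        have hs2 : (11566251/10000000 : ℝ) ≤ x^2 :=
          sq_step (by norm_num) hkey hs1 hR (by norm_num)
        have hxu : x^2 < (841/729 : ℝ) := by
          have h1 : x < 1 + 2/(3*((9:ℕ):ℝ)) := hcon
          norm_num at h1; nlinarith [hx0, h1]
        norm_num at hs2; linarith
      · -- n = 10
        have hA : (8293147/10000000 : ℝ) ≤ a := by
          have := Real.log_two_gt_d9; norm_num at ha_lo ⊢; linarith
        have hB : (776637/2000000 : ℝ) ≤ b := by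
          have := Real.pi_gt_d20; norm_num at hb_lo ⊢; linarith
        have hR : (13293147/5000000 : ℝ) ≤ 2*a + 1 := by linarith
        have hs0 : (419277/500000 : ℝ) ≤ x^2 := by
          nlinarith [sq_nonneg (a - (8293147/10000000 : ℝ)), sq_nonneg (b - (776637/2000000 : ℝ)), hA, hB, e2]
        have hs1 : (11333701/10000000 : ℝ) ≤ x^2 :=
          sq_step (by norm_num) hkey hs0 hR (by norm_num)
        have hs2 : (11425803/10000000 : ℝ) ≤ x^2 :=
          sq_step (by norm_num) hkey hs1 hR (by norm_num)
        have hxu : x^2 < (256/225 : ℝ) := by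
          have h1 : x < 1 + 2/(3*((10:ℕ):ℝ)) := hcon
          norm_num at h1; nlinarith [hx0, h1]
        norm_num at hs2; linarith
      · -- n = 11
        have hA : (4323331/5000000 : ℝ) ≤ a := by
          have := Real.log_two_gt_d9; norm_num at ha_lo ⊢; linarith
        have hB : (745703/2000000 : ℝ) ≤ b := by
          have := Real.pi_gt_d20; norm_num at hb_lo ⊢; linarith
        have hR : (6823331/2500000 : ℝ) ≤ 2*a + 1 := by linarith
        have hs0 : (177333/200000 : ℝ) ≤ x^2 := by
          nlinarith [sq_nonneg (a - (4323331/5000000 : ℝ)), sq_nonneg (b - (745703/2000000 : ℝ)), hA, hB, e2]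
        have hs1 : (2809881/2500000 : ℝ) ≤ x^2 :=
          sq_step (by norm_num) hkey hs0 hR (by norm_num)
        have hs2 : (5652327/5000000 : ℝ) ≤ x^2 :=
          sq_step (by norm_num) hkey hs1 hR (by norm_num)
        have hxu : x^2 < (1225/1089 : ℝ) := by
          have h1 : x < 1 + 2/(3*((11:ℕ):ℝ)) := hcon
          norm_num at h1; nlinarith [hx0, h1]
        norm_num at hs2; linarith
      · -- n = 12
        have hA : (1782191/2000000 : ℝ) ≤ a := by
          have := Real.log_two_gt_d9; norm_num at ha_lo ⊢; linarith
        have hB : (3569321/10000000 : ℝ) ≤ b := by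
          have := Real.pi_gt_d20; norm_num at hb_lo ⊢; linarith
        have hR : (2782191/1000000 : ℝ) ≤ 2*a + 1 := by linarith
        have hs0 : (921451/1000000 : ℝ) ≤ x^2 := by
          nlinarith [sq_nonneg (a - (1782191/2000000 : ℝ)), sq_nonneg (b - (3569321/10000000 : ℝ)), hA, hB, e2]
        have hs1 : (2230569/2000000 : ℝ) ≤ x^2 :=
          sq_step (by norm_num) hkey hs0 hR (by norm_num)
        have hxu : x^2 < (361/324 : ℝ) := by
          have h1 : x < 1 + 2/(3*((12:ℕ):ℝ)) := hcon
          norm_num at h1; nlinarith [hx0, h1]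
        norm_num at hs1; linarith
      · -- n = 13
        have hA : (9113071/10000000 : ℝ) ≤ a := by
          have := Real.log_two_gt_d9; norm_num at ha_lo ⊢; linarith
        have hB : (3413101/10000000 : ℝ) ≤ b := by
          have := Real.pi_gt_d20; norm_num at hb_lo ⊢; linarith
        have hR : (14113071/5000000 : ℝ) ≤ 2*a + 1 := by linarith
        have hs0 : (946973/1000000 : ℝ) ≤ x^2 := by
          nlinarith [sq_nonneg (a - (9113071/10000000 : ℝ)), sq_nonneg (b - (3413101/10000000 : ℝ)), hA, hB, e2]
        have hs1 : (2214931/2000000 : ℝ) ≤ x^2 :=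
          sq_step (by norm_num) hkey hs0 hR (by norm_num)
        have hxu : x^2 < (1681/1521 : ℝ) := by
          have h1 : x < 1 + 2/(3*((13:ℕ):ℝ)) := hcon
          norm_num at h1; nlinarith [hx0, h1]
        norm_num at hs1; linarith
      · -- n = 14
        have hA : (1854123/2000000 : ℝ) ≤ a := by
          have := Real.log_two_gt_d9; norm_num at ha_lo ⊢; linarith
        have hB : (3263499/10000000 : ℝ) ≤ b := by
          have := Real.pi_gt_d20; norm_num at hb_lo ⊢; linarith
        have hR : (2854123/1000000 : ℝ) ≤ 2*a + 1 := by linarith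
        have hs0 : (965947/1000000 : ℝ) ≤ x^2 := by
          nlinarith [sq_nonneg (a - (1854123/2000000 : ℝ)), sq_nonneg (b - (3263499/10000000 : ℝ)), hA, hB, e2]
        have hs1 : (2200931/2000000 : ℝ) ≤ x^2 :=
          sq_step (by norm_num) hkey hs0 hR (by norm_num)
        have hxu : x^2 < (484/441 : ℝ) := by
          have h1 : x < 1 + 2/(3*((14:ℕ):ℝ)) := hcon
          norm_num at h1; nlinarith [hx0, h1]
        norm_num at hs1; linarith
      · -- n = 15
        have hA : (9395431/10000000 : ℝ) ≤ a := by
          have := Real.log_two_gt_d9; norm_num at ha_lo ⊢; linarith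
        have hB : (3122123/10000000 : ℝ) ≤ b := by
          have := Real.pi_gt_d20; norm_num at hb_lo ⊢; linarith
        have hR : (14395431/5000000 : ℝ) ≤ 2*a + 1 := by linarith
        have hs0 : (980217/1000000 : ℝ) ≤ x^2 := by
          nlinarith [sq_nonneg (a - (9395431/10000000 : ℝ)), sq_nonneg (b - (3122123/10000000 : ℝ)), hA, hB, e2]
        have hs1 : (2188419/2000000 : ℝ) ≤ x^2 :=
          sq_step (by norm_num) hkey hs0 hR (by norm_num)
        have hxu : x^2 < (2209/2025 : ℝ) := by
          have h1 : x < 1 + 2/(3*((15:ℕ):ℝ)) := hcon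
          norm_num at h1; nlinarith [hx0, h1]
        norm_num at hs1; linarith
    · -- n ≥ 16 : uniform argument
      have hn16 : (16:ℝ) ≤ (n:ℝ) := by exact_mod_cast h16
      have hLl := Real.log_two_gt_d9
      have hnne : (n:ℝ) ≠ 0 := ne_of_gt hnpos
      have hmul : (1 + Real.log 2/(n:ℝ) - 24/(n:ℝ)^2) * (n:ℝ)^2
          = (n:ℝ)^2 + Real.log 2 * (n:ℝ) - 24 := by field_simp
      have h1 : (n:ℝ)^2 + Real.log 2 * (n:ℝ) - 24 ≤ a * (n:ℝ)^2 := by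
        rw [← hmul]
        nlinarith [ha_lo, sq_nonneg (n:ℝ)]
      have hA : (9479/10000:ℝ) ≤ a := by
        nlinarith [h1, hLl, hn16, sq_nonneg ((n:ℝ) - 16), mul_pos hnpos hnpos]
      have hlow : (379431441/100000000:ℝ) ≤ (x^2)^n := by
        nlinarith [hkey, e2, sq_nonneg b, hA, sq_nonneg (a - 9479/10000)]
      have hup : (x^2)^n < (37937/10000:ℝ) := by
        have h2n : 2*n ≠ 0 := by omega
        have hxlt : x^(2*n) < (1 + 2/(3*(n:ℝ)))^(2*n) := by
          exact pow_lt_pow_left₀ hcon hx0 h2n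
        have hexp1 : (1 + 2/(3*(n:ℝ))) ≤ Real.exp (2/(3*(n:ℝ))) := by
          have := Real.add_one_le_exp (2/(3*(n:ℝ)))
          linarith
        have hexp2 : (1 + 2/(3*(n:ℝ)))^(2*n) ≤ (Real.exp (2/(3*(n:ℝ))))^(2*n) := by
          apply pow_le_pow_left₀ (by positivity) hexp1
        have hexp3 : (Real.exp (2/(3*(n:ℝ))))^(2*n) = Real.exp (4/3) := by
          rw [← Real.exp_nat_mul]
          congr 1
          field_simp
          push_cast
          ring
        have hexp4 : Real.exp ((4:ℝ)/3) < 37937/10000 := by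
          have he1 := Real.exp_one_lt_d9
          have he0 := Real.exp_pos ((4:ℝ)/3)
          have h5 : (Real.exp ((4:ℝ)/3))^3 = Real.exp 4 := by
            rw [← Real.exp_nat_mul]; norm_num
          have h6 : Real.exp (4:ℝ) = (Real.exp 1)^4 := by
            rw [← Real.exp_nat_mul]; norm_num
          have h7 : (Real.exp 1)^4 < (2.7182818286:ℝ)^4 := by
            apply pow_lt_pow_left₀ he1 (le_of_lt (Real.exp_pos 1))
            norm_num
          have h8 : (Real.exp ((4:ℝ)/3))^3 < (37937/10000:ℝ)^3 := by
            rw [h5, h6]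
            nlinarith [h7]
          exact lt_of_pow_lt_pow_left₀ 3 (by norm_num) h8
        have hfin : (x^2)^n = x^(2*n) := by rw [← pow_mul]
        rw [hfin]
        calc x^(2*n) < (1 + 2/(3*(n:ℝ)))^(2*n) := hxlt
          _ ≤ (Real.exp (2/(3*(n:ℝ))))^(2*n) := hexp2
          _ = Real.exp (4/3) := hexp3
          _ < 37937/10000 := hexp4
      linarith
  -- conclude
  have hx1 : (0:ℝ) < x - 1 := by
    have h2 : (0:ℝ) < 2/(3*(n:ℝ)) := by positivity
    linarith
  have key' : 2/(3*(n:ℝ)) ≤ x - 1 := by linarith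
  have h3 : (2:ℝ) ≤ (x-1)*(3*(n:ℝ)) := by
    rw [div_le_iff₀ (by positivity : (0:ℝ) < 3*(n:ℝ))] at key'
    linarith
  rw [div_le_div_iff₀ hx1 (by norm_num : (0:ℝ) < 2)]
  nlinarith [h3]
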